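/- Suppose the cost functions f_j are integer-valued, not all identically zero, let P = max_{j∈𝒥} p_j and W = max_{j∈𝒥, t∈𝒯} (f_j(t) − f_j(t−1)) (with f_j(0) := 0). Then the set of interval endpoints satisfies |𝒯̂| ≤ 1 + n·(2 + log_{1+ε}(nPW)); in particular the number of intervals in the partition is O(n log(nPW)). -/

import Mathlib

open Finset
open scoped Classical

/-- `t` belongs to class `k` of the cost function `g`: class `0` is `{t : g t = 0}` and,
for `k ≥ 1`, class `k` is `{t : (1+ε)^(k−1) ≤ g t < (1+ε)^k}`. -/
def InClass (ε : ℝ) (g : ℕ → ℕ) (k t : ℕ) : Prop :=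
  if k = 0 then g t = 0
  else (1 + ε) ^ (k - 1) ≤ (g t : ℝ) ∧ (g t : ℝ) < (1 + ε) ^ k

/-- The set `𝒯̂_j` of left endpoints: the times `t ∈ 𝒯 = {1,…,T}` that are the minimum
element of some (nonempty) class of `g`. -/
noncomputable def leftEnds (T : ℕ) (ε : ℝ) (g : ℕ → ℕ) : Finset ℕ :=
  (Icc 1 T).filter fun t => ∃ k : ℕ,
    InClass ε g k t ∧ ∀ s ∈ Icc 1 T, InClass ε g k s → t ≤ s

/-- Suppose the cost functions `f_j` are (nonnegative) integer-valued
and nondecreasing, not all identically zero; let `P = max_j p_j` and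
`W = max_{j,t∈𝒯} (f_j(t) − f_j(t−1))` (with `f_j(0) := 0`).  Then the set of interval
endpoints `𝒯̂ = (∪_j 𝒯̂_j) ∪ {1}` satisfies `|𝒯̂| ≤ 1 + n·(2 + log_{1+ε}(nPW))`; in
particular the number of intervals in the partition is `O(n log (nPW))`. -/

noncomputable def cls (ε : ℝ) (g : ℕ → ℕ) (t : ℕ) : ℕ :=
  if g t = 0 then 0 else ⌊Real.logb (1 + ε) (g t)⌋₊ + 1

lemma inClass_unique {ε : ℝ} (hε : 0 < ε) {g : ℕ → ℕ} {k k' t : ℕ}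
    (h : InClass ε g k t) (h' : InClass ε g k' t) : k = k' := by
  have hb : (1:ℝ) < 1 + ε := by linarith
  -- helper: k=0, k'≠0 impossible
  have key : ∀ a b : ℕ, InClass ε g a t → InClass ε g b t → a < b → False := by
    intro a b ha hb' hab
    rcases Nat.eq_zero_or_pos a with rfl | hapos
    · simp only [InClass, if_pos rfl] at ha
      have hbne : b ≠ 0 := hab.ne'
      simp only [InClass, if_neg hbne] at hb'
      have : (0:ℝ) < (1+ε) ^ (b-1) := by positivity
      rw [ha] at hb'; push_cast at hb'; linarith [hb'.1]
    · have hane : a ≠ 0 := hapos.ne'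
      have hbne : b ≠ 0 := (Nat.lt_of_lt_of_le hapos hab.le).ne'
      simp only [InClass, if_neg hane] at ha
      simp only [InClass, if_neg hbne] at hb'
      have hle : (1+ε) ^ a ≤ (1+ε) ^ (b-1) := by
        apply pow_le_pow_right₀ (by linarith)
        omega
      linarith [ha.2, hb'.1]
  rcases lt_trichotomy k k' with h1 | h1 | h1
  · exact (key k k' h h' h1).elim
  · exact h1
  · exact (key k' k h' h h1).elim

lemma inClass_cls {ε : ℝ} (hε : 0 < ε) (g : ℕ → ℕ) (t : ℕ) :
    InClass ε g (cls ε g t) t := by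
  have hb : (1:ℝ) < 1 + ε := by linarith
  unfold cls
  by_cases h : g t = 0
  · simp [InClass, h]
  · rw [if_neg h]
    have hx1 : (1:ℝ) ≤ (g t : ℝ) := by
      exact_mod_cast Nat.one_le_iff_ne_zero.mpr h
    have hx0 : (0:ℝ) < (g t : ℝ) := by linarith
    set l := Real.logb (1+ε) (g t) with hl
    have hl0 : 0 ≤ l := Real.logb_nonneg hb hx1
    have hrl : (1+ε) ^ l = (g t : ℝ) := Real.rpow_logb (by linarith) (by linarith) hx0
    constructor
    · simp only [Nat.add_sub_cancel]
      calc (1+ε) ^ (⌊l⌋₊ : ℕ) = (1+ε) ^ ((⌊l⌋₊ : ℕ) : ℝ) := by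
            rw [Real.rpow_natCast]
        _ ≤ (1+ε) ^ l := by
            apply Real.rpow_le_rpow_left_iff hb |>.mpr (Nat.floor_le hl0)
        _ = (g t : ℝ) := hrl
    · calc (g t : ℝ) = (1+ε) ^ l := hrl.symm
        _ < (1+ε) ^ ((⌊l⌋₊ + 1 : ℕ) : ℝ) := by
            apply Real.rpow_lt_rpow_left_iff hb |>.mpr
            push_cast
            exact Nat.lt_floor_add_one l
        _ = (1+ε) ^ (⌊l⌋₊ + 1 : ℕ) := Real.rpow_natCast _ _

lemma card_leftEnds_le {ε : ℝ} (hε : 0 < ε) (T : ℕ) (g : ℕ → ℕ) (M : ℕ) (hM : 1 ≤ M)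
    (hbound : ∀ t ∈ Icc 1 T, g t ≤ M) :
    (leftEnds T ε g).card ≤ ⌊Real.logb (1 + ε) M⌋₊ + 2 := by
  have hb : (1:ℝ) < 1 + ε := by linarith
  set K := ⌊Real.logb (1 + ε) M⌋₊
  have h1 : (leftEnds T ε g).card ≤ (range (K + 2)).card := by
    apply Finset.card_le_card_of_injOn (cls ε g)
    · intro t ht
      simp only [Finset.mem_coe, leftEnds, mem_filter] at ht
      obtain ⟨htT, k, hk, _⟩ := ht
      have hkc : k = cls ε g t := inClass_unique hε hk (inClass_cls hε g t)
      simp only [Finset.mem_coe, mem_range]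
      unfold cls
      by_cases h : g t = 0
      · simp [h]
      · rw [if_neg h]
        have hlog : Real.logb (1+ε) (g t) ≤ Real.logb (1+ε) M := by
          apply Real.logb_le_logb_of_le hb (by exact_mod_cast Nat.one_le_iff_ne_zero.mpr h)
          exact_mod_cast hbound t htT
        have : ⌊Real.logb (1+ε) (g t)⌋₊ ≤ K := Nat.floor_le_floor hlog
        omega
    · intro t ht s hs heq
      rw [Finset.mem_coe] at ht hs
      simp only [leftEnds, mem_filter] at ht hs
      obtain ⟨htT, k, hk, hkmin⟩ := ht
      obtain ⟨hsT, k', hk', hkmin'⟩ := hs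
      have hkc : k = cls ε g t := inClass_unique hε hk (inClass_cls hε g t)
      have hkc' : k' = cls ε g s := inClass_unique hε hk' (inClass_cls hε g s)
      have hkk : k = k' := by rw [hkc, hkc', heq]
      have h1 : t ≤ s := hkmin s hsT (hkk ▸ hk')
      have h2 : s ≤ t := hkmin' t htT (hkk ▸ hk)
      omega
  simpa using h1

theorem stmt_11 {n : ℕ} (ε : ℝ) (hε : 0 < ε)
    (p : Fin n → ℕ) (hp : ∀ j, 0 < p j)
    (T : ℕ) (hT : T = ∑ j, p j)
    (f : Fin n → ℕ → ℕ) (hf0 : ∀ j, f j 0 = 0)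
    (hfmono : ∀ j, ∀ s t : ℕ, s ≤ t → t ≤ T → f j s ≤ f j t)
    (hnz : ∃ j, ∃ t ∈ Icc 1 T, f j t ≠ 0)
    (P W : ℕ) (hP : P = univ.sup p)
    (hW : W = univ.sup fun j => (Icc 1 T).sup fun t => f j t - f j (t - 1)) :
    (((univ.biUnion fun j => leftEnds T ε (f j)) ∪ {1}).card : ℝ) ≤
      1 + (n : ℝ) * (2 + Real.log ((n * P * W : ℕ) : ℝ) / Real.log (1 + ε)) := by
  obtain ⟨j0, t0, ht0, hft0⟩ := hnz
  have hn : 0 < n := j0.pos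
  have hb : (1:ℝ) < 1 + ε := by linarith
  have hstep : ∀ j, ∀ t ∈ Icc 1 T, f j t ≤ f j (t - 1) + W := by
    intro j t ht
    have h1 : f j t - f j (t - 1) ≤ W := by
      rw [hW]
      exact le_trans (Finset.le_sup (f := fun t => f j t - f j (t-1)) ht)
        (Finset.le_sup (f := fun j => (Icc 1 T).sup fun t => f j t - f j (t - 1)) (mem_univ j))
    omega
  have hgrow : ∀ j, ∀ t, t ≤ T → f j t ≤ t * W := by
    intro j t
    induction t with
    | zero => intro _; simp [hf0 j]
    | succ t ih =>
      intro h
      have h1 := hstep j (t + 1) (by simp; omega)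
      have h2 := ih (by omega)
      simp only [Nat.add_sub_cancel] at h1
      have : (t + 1) * W = t * W + W := by ring
      omega
  have hW1 : 1 ≤ W := by
    by_contra h
    have hw0 : W = 0 := by omega
    have := hgrow j0 t0 (mem_Icc.mp ht0).2
    simp [hw0] at this
    exact hft0 this
  have hP1 : 1 ≤ P := by
    rw [hP]; exact le_trans (hp j0) (Finset.le_sup (mem_univ j0))
  have hTle : T ≤ n * P := by
    rw [hT]
    calc ∑ j, p j ≤ ∑ _j : Fin n, P :=
          Finset.sum_le_sum (fun j _ => hP ▸ Finset.le_sup (mem_univ j))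
      _ = n * P := by simp [mul_comm]
  set M := n * P * W with hM
  have hM1 : 1 ≤ M := Nat.one_le_iff_ne_zero.mpr (by positivity)
  have hbound : ∀ j, ∀ t ∈ Icc 1 T, f j t ≤ M := by
    intro j t ht
    calc f j t ≤ t * W := hgrow j t (mem_Icc.mp ht).2
      _ ≤ (n * P) * W := Nat.mul_le_mul_right W (le_trans (mem_Icc.mp ht).2 hTle)
  set K := ⌊Real.logb (1 + ε) M⌋₊ with hK
  have hcard : ((univ.biUnion fun j => leftEnds T ε (f j)) ∪ {1}).card ≤ 1 + n * (K + 2) := by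
    calc ((univ.biUnion fun j => leftEnds T ε (f j)) ∪ {1}).card
        ≤ (univ.biUnion fun j => leftEnds T ε (f j)).card + ({1} : Finset ℕ).card :=
          card_union_le _ _
      _ ≤ (∑ j, (leftEnds T ε (f j)).card) + 1 := by
          have := Finset.card_biUnion_le (s := (univ : Finset (Fin n)))
            (t := fun j => leftEnds T ε (f j))
          simp only [card_singleton]
          omega
      _ ≤ (∑ _j : Fin n, (K + 2)) + 1 := by
          gcongr with j
          exact card_leftEnds_le hε T (f j) M hM1 (hbound j)
      _ = 1 + n * (K + 2) := by simp [mul_comm, Nat.add_comm]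
  have hKR : (K : ℝ) ≤ Real.log M / Real.log (1 + ε) := by
    rw [Real.log_div_log]
    exact Nat.floor_le (Real.logb_nonneg hb (by exact_mod_cast hM1))
  calc (((univ.biUnion fun j => leftEnds T ε (f j)) ∪ {1}).card : ℝ)
      ≤ ((1 + n * (K + 2) : ℕ) : ℝ) := by exact_mod_cast hcard
    _ = 1 + (n : ℝ) * ((K : ℝ) + 2) := by push_cast; ring
    _ ≤ 1 + (n : ℝ) * (2 + Real.log M / Real.log (1 + ε)) := by
        have hn0 : (0:ℝ) ≤ n := Nat.cast_nonneg n
        nlinarith
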